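/- arXiv:2304.11322 — 7 statements merged into one kernel-verified Lean document; each statement's English description precedes it below -/
import Mathlib

section
/- For every β ∈ (1, 3/2], the polynomial P_β(u) = 4a₃u² + 2a₂u + (a₁ - a₃), where a₁ = 36β⁴ - 114β³ + 156β² - 102β + 27, a₂ = 24β⁴ - 56β³ + 48β² - 16β, and a₃ = 12β⁴ - 40β³ + 54β² - 35β + 9, is nonnegative for all u ∈ [-1, 1]. -/
theorem stmt_2 (β : ℝ) (hβ : β ∈ Set.Ioc (1:ℝ) (3/2)) (u : ℝ) (hu : u ∈ Set.Icc (-1:ℝ) 1) :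
    0 ≤ 4*(12*β^4 - 40*β^3 + 54*β^2 - 35*β + 9)*u^2
      + 2*(24*β^4 - 56*β^3 + 48*β^2 - 16*β)*u
      + ((36*β^4 - 114*β^3 + 156*β^2 - 102*β + 27) - (12*β^4 - 40*β^3 + 54*β^2 - 35*β + 9)) := by
  obtain ⟨h1, h2⟩ := hβ
  obtain ⟨h3, h4⟩ := hu
  have hb1 : (0:ℝ) ≤ β - 1 := by linarith
  have hb2 : (0:ℝ) ≤ 3 - 2*β := by linarith
  have ha3 : (0:ℝ) ≤ 12*β^4 - 40*β^3 + 54*β^2 - 35*β + 9 := by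
    nlinarith [mul_nonneg hb1 hb2, sq_nonneg (β-1), mul_nonneg (mul_nonneg hb1 hb1) hb1, mul_nonneg (mul_nonneg hb1 hb1) hb2]
  have h42 : (0:ℝ) ≤ (24*β^4 - 56*β^3 + 48*β^2 - 16*β) - 4*(12*β^4 - 40*β^3 + 54*β^2 - 35*β + 9) := by
    nlinarith [mul_nonneg hb1 hb2, sq_nonneg (β-1), mul_nonneg (mul_nonneg hb1 hb1) hb1, mul_nonneg (mul_nonneg hb1 hb1) hb2, mul_nonneg (mul_nonneg hb1 hb2) hb2]
  have hc : (0:ℝ) ≤ (36*β^4 - 114*β^3 + 156*β^2 - 102*β + 27) + 3*(12*β^4 - 40*β^3 + 54*β^2 - 35*β + 9) - 2*(24*β^4 - 56*β^3 + 48*β^2 - 16*β) := by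
    nlinarith [mul_nonneg hb1 hb2, sq_nonneg (β-1), mul_nonneg (mul_nonneg hb1 hb1) hb1, mul_nonneg (mul_nonneg hb1 hb1) hb2, mul_nonneg (mul_nonneg hb1 hb2) hb2]
  have hu1 : (0:ℝ) ≤ u + 1 := by linarith
  nlinarith [mul_nonneg (mul_nonneg hu1 hu1) ha3, mul_nonneg hu1 h42]
end

section
/- For every β ∈ (3/2, 2), the quartic polynomial K_β(u) = 16b₅u⁴ + 8b₄u³ + (4b₃ - 12b₅)u² + (2b₂ - 4b₄)u + (b₁ - b₃ + b₅) is nonnegative for all u ∈ [-1, 1], where b₁ = 36β⁴ - 74β³ + 6β² + 83β - 48, b₂ = 72β⁴ - 272β³ + 456β² - 400β + 144, b₃ = 48β⁴ - 166β³ + 216β² - 116β + 9, b₄ = 24β⁴ - 108β³ + 204β² - 192β + 72, b₅ = 8β³ - 30β² + 37β - 15. -/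
theorem stmt_3 (β : ℝ) (hβ : β ∈ Set.Ioo (3/2 : ℝ) 2) (u : ℝ) (hu : u ∈ Set.Icc (-1:ℝ) 1) :
    0 ≤ 16*(8*β^3 - 30*β^2 + 37*β - 15)*u^4
      + 8*(24*β^4 - 108*β^3 + 204*β^2 - 192*β + 72)*u^3
      + (4*(48*β^4 - 166*β^3 + 216*β^2 - 116*β + 9) - 12*(8*β^3 - 30*β^2 + 37*β - 15))*u^2
      + (2*(72*β^4 - 272*β^3 + 456*β^2 - 400*β + 144) - 4*(24*β^4 - 108*β^3 + 204*β^2 - 192*β + 72))*u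
      + ((36*β^4 - 74*β^3 + 6*β^2 + 83*β - 48) - (48*β^4 - 166*β^3 + 216*β^2 - 116*β + 9)
          + (8*β^3 - 30*β^2 + 37*β - 15)) := by
  obtain ⟨h1, h2⟩ := hβ
  obtain ⟨h3, h4⟩ := hu
  have hs : (0:ℝ) ≤ 2 - β := by linarith
  have hs2 : (2:ℝ) - β ≤ 1/2 := by linarith
  have ht : (0:ℝ) ≤ u + 1 := by linarith
  have hA : (0:ℝ) ≤ 30*(2-β)^3 - 28*(2-β)^2 + 6*(2-β) + 1 := by
    nlinarith [mul_nonneg hs (sq_nonneg (15*(2-β) - 7)), sq_nonneg (2-β)]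
  have hB : (0:ℝ) ≤ -96*(2-β)^3 + 118*(2-β)^2 - 42*(2-β) + 11 := by
    nlinarith [mul_nonneg (sq_nonneg (2-β)) (by linarith : (0:ℝ) ≤ 1/2 - (2-β)), sq_nonneg (10*(2-β)-3)]
  have h0 : (0:ℝ) ≤ 12*(2-β)^3*(5*β-7) := by
    have := pow_nonneg hs 3; nlinarith
  have hc1 : (0:ℝ) ≤ 8*(2-β)*(30*(2-β)^3 - 28*(2-β)^2 + 6*(2-β) + 1) * (u+1) :=
    mul_nonneg (mul_nonneg (by nlinarith) hA) ht
  have hc2 : (0:ℝ) ≤ 4*(2-β)*(-96*(2-β)^3 + 118*(2-β)^2 - 42*(2-β) + 11) * (u+1)^2 :=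
    mul_nonneg (mul_nonneg (by nlinarith) hB) (sq_nonneg _)
  have hc3 : (0:ℝ) ≤ 32*(2-β)*((2*β-3)*((8-3*β)*(β-1))) * (u+1)^3 := by
    apply mul_nonneg
    · apply mul_nonneg (by nlinarith)
      apply mul_nonneg (by linarith)
      apply mul_nonneg (by linarith) (by linarith)
    · positivity
  have hc4 : (0:ℝ) ≤ 16*((2*β-3)*((4*β-5)*(β-1))) * (u+1)^4 := by
    apply mul_nonneg
    · apply mul_nonneg (by norm_num)
      apply mul_nonneg (by linarith)
      apply mul_nonneg (by linarith) (by linarith)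
    · positivity
  nlinarith [h0, hc1, hc2, hc3, hc4]
end

section
/- For ρ ≥ 0.74 and all w ∈ [0, 1/2], the function f_ρ(w) = e^{4ρ(1-2w)} - (w·e^{-2ρ} + 1 - w)/(w - w·e^{-2ρ} + e^{-2ρ}) is nonnegative. -/
private lemma key_ineq (a x : ℝ) (ha : 1.48 ≤ a) (hx0 : 0 ≤ x) (hx1 : x ≤ 1) :
    x * (1 - Real.exp (-a)) * (Real.exp (2*a*x) + 1) ≤
      (1 + Real.exp (-a)) * (Real.exp (2*a*x) - 1) := by
  have ha0 : (0:ℝ) < a := by linarith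
  have hp0 : 0 < Real.exp (-a) := Real.exp_pos _
  have hp1 : Real.exp (-a) ≤ 1 := by
    rw [Real.exp_le_one_iff]; linarith
  have hq1 : 1 ≤ Real.exp (2*a*x) := by
    rw [Real.one_le_exp_iff]; positivity
  set p := Real.exp (-a) with hp
  set q := Real.exp (2*a*x) with hq
  rcases le_or_gt (1/2 : ℝ) x with hx | hx
  · -- x ≥ 1/2 : p*q = exp(2ax - a) ≥ 1
    have hpq : 1 ≤ p * q := by
      rw [hp, hq, ← Real.exp_add, Real.one_le_exp_iff]
      nlinarith
    nlinarith [mul_nonneg (mul_nonneg hx0 (by linarith : (0:ℝ) ≤ 1 - p)) (by linarith : (0:ℝ) ≤ q + 1),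
      mul_nonneg (by linarith : (0:ℝ) ≤ 1 - x) (mul_nonneg (by linarith : (0:ℝ) ≤ 1 - p) (by linarith : (0:ℝ) ≤ q + 1))]
  · rcases le_or_gt (0.6 : ℝ) (a * x) with hax | hax
    · -- a*x ≥ 0.6 : q ≥ exp(1.2) ≥ 3
      have hq3 : (3:ℝ) ≤ q := by
        have h12 : Real.exp (1.2 : ℝ) ≤ q := by
          rw [hq]; apply Real.exp_le_exp.mpr; linarith
        have h1 : (2.7182818283 : ℝ) < Real.exp 1 := Real.exp_one_gt_d9
        have h2 : (1.2 : ℝ) ≤ Real.exp 0.2 := by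
          nlinarith [Real.add_one_le_exp (0.2 : ℝ)]
        have : (3:ℝ) ≤ Real.exp (1.2 : ℝ) := by
          have : Real.exp (1.2 : ℝ) = Real.exp 1 * Real.exp 0.2 := by
            rw [← Real.exp_add]; norm_num
          nlinarith [Real.exp_pos (0.2 : ℝ)]
        linarith
      nlinarith [mul_nonneg hp0.le (by linarith : (0:ℝ) ≤ q - 1),
        mul_nonneg (mul_nonneg hx0 hp0.le) (by linarith : (0:ℝ) ≤ q + 1),
        mul_nonneg (by linarith : (0:ℝ) ≤ 1/2 - x) (by linarith : (0:ℝ) ≤ q + 1)]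
    · -- a*x ≤ 0.6 : use (1+ax)^2 ≤ q
      have hsq : (1 + a*x)^2 ≤ q := by
        have h1 : 1 + a*x ≤ Real.exp (a*x) := by linarith [Real.add_one_le_exp (a*x)]
        have h2 : Real.exp (a*x) ^ 2 = q := by
          rw [hq, sq, ← Real.exp_add]; ring_nf
        have h0 : 0 ≤ 1 + a*x := by positivity
        nlinarith [Real.exp_pos (a*x)]
      have hxs : 1.48 * x ≤ a * x := by nlinarith
      -- first show x*(q+1) ≤ q - 1
      have hmain : x * (q + 1) ≤ q - 1 := by
        nlinarith [hsq, hax.le, hxs, mul_nonneg (mul_nonneg ha0.le hx0) (mul_nonneg ha0.le hx0)]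
      nlinarith [mul_nonneg hp0.le (by linarith : (0:ℝ) ≤ q - 1),
        mul_nonneg (mul_nonneg hx0 hp0.le) (by linarith : (0:ℝ) ≤ q + 1)]

theorem stmt_10 (ρ : ℝ) (hρ : 0.74 ≤ ρ) (w : ℝ) (hw : w ∈ Set.Icc (0:ℝ) (1/2)) :
    0 ≤ Real.exp (4*ρ*(1 - 2*w)) -
      (w * Real.exp (-2*ρ) + 1 - w) / (w - w * Real.exp (-2*ρ) + Real.exp (-2*ρ)) := by
  obtain ⟨hw0, hw2⟩ := hw
  have ht0 : 0 < Real.exp (-2*ρ) := Real.exp_pos _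
  have ht1 : Real.exp (-2*ρ) ≤ 1 := by
    rw [Real.exp_le_one_iff]; linarith
  set t := Real.exp (-2*ρ) with ht
  have hD : 0 < w - w * t + t := by nlinarith
  rw [sub_nonneg, div_le_iff₀ hD]
  have hkey := key_ineq (2*ρ) (1 - 2*w) (by linarith) (by linarith) (by linarith)
  have he1 : Real.exp (-(2*ρ)) = t := by rw [ht]; ring_nf
  have he2 : Real.exp (2*(2*ρ)*(1 - 2*w)) = Real.exp (4*ρ*(1 - 2*w)) := by ring_nf
  rw [he1, he2] at hkey
  nlinarith [hkey, Real.exp_pos (4*ρ*(1 - 2*w))]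
end

section
/- For ρ ≥ 0.74 and w ∈ (1/4, 1/2], one has φ_ρ(w) := (w/(1-w)) · (e^{2ρ(2-4w)} - e^{-2ρ})/(1 - e^{2ρ(2-4w)}·e^{-2ρ}) ≥ 1. -/
theorem stmt_12 (ρ : ℝ) (hρ : 0.74 ≤ ρ) (w : ℝ) (hw : w ∈ Set.Ioc (1/4 : ℝ) (1/2)) :
    1 ≤ (w/(1 - w)) *
      ((Real.exp (2*ρ*(2 - 4*w)) - Real.exp (-2*ρ)) /
        (1 - Real.exp (2*ρ*(2 - 4*w)) * Real.exp (-2*ρ))) := by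
  obtain ⟨hw1, hw2⟩ := hw
  have hρ0 : (0:ℝ) < ρ := by norm_num at hρ ⊢; linarith
  set q := Real.exp (-2*ρ) with hqdef
  set s := 2*ρ*(2 - 4*w) with hsdef
  have hq0 : 0 < q := Real.exp_pos _
  have hq1 : q < 1 := by
    rw [hqdef, Real.exp_lt_one_iff]; nlinarith
  have hs0 : 0 ≤ s := by nlinarith
  have hes := Real.add_one_le_exp s
  have hes0 : 0 < Real.exp s := Real.exp_pos _
  have hD : Real.exp s * q < 1 := by
    rw [hqdef, hsdef, ← Real.exp_add, Real.exp_lt_one_iff]; nlinarith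
  have hDpos : 0 < 1 - Real.exp s * q := by linarith
  have h1w : 0 < 1 - w := by linarith
  -- key numeric inequality: 1 - q ≤ 4ρ(w + (1-w)q)
  have hkey : 1 - q ≤ 4*ρ*(w + (1-w)*q) := by
    rcases le_or_gt 1 ρ with h | h
    · nlinarith [mul_pos h1w hq0]
    · have he2 : Real.exp (-2:ℝ) ≤ q := by
        rw [hqdef]; exact Real.exp_le_exp.2 (by linarith)
      have hlb : (0.135:ℝ) < Real.exp (-2:ℝ) := by
        have h1 : Real.exp 1 < 2.7182818286 := Real.exp_one_lt_d9
        have h2 : Real.exp (2:ℝ) = Real.exp 1 * Real.exp 1 := by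
          rw [← Real.exp_add]; norm_num
        have h3 : Real.exp (2:ℝ) < 7.4 := by
          rw [h2]; nlinarith [Real.exp_pos 1]
        have h4 : Real.exp (-2:ℝ) = (Real.exp 2)⁻¹ := by
          rw [← Real.exp_neg]
        rw [h4]
        rw [lt_inv_comm₀ (by norm_num) (Real.exp_pos 2)]
        calc Real.exp (2:ℝ) < 7.4 := h3
          _ ≤ (0.135:ℝ)⁻¹ := by norm_num
      nlinarith [mul_pos h1w hq0, mul_pos hρ0 hq0]
  -- polynomial core: w(e^s - q) ≥ (1-w)(1 - e^s q)
  have hcore : (1 - w) * (1 - Real.exp s * q) ≤ w * (Real.exp s - q) := by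
    nlinarith [mul_nonneg (sub_nonneg.2 hes) (by nlinarith : (0:ℝ) ≤ w + (1-w)*q),
      mul_nonneg (sub_nonneg.2 hkey) (by linarith : (0:ℝ) ≤ 1 - 2*w),
      mul_nonneg hs0 hq0.le]
  rw [div_mul_div_comm, le_div_iff₀ (by positivity), one_mul]
  linarith [hcore]
end

section
/- For 0 < ρ < 2, one has e^{π/2} > 4·(1 + Σ_{l≥2} l² e^{-π(l²-1)}), and consequently h₁·e^{-π/ρ²} > h₂ where h₁ = Σ_{l≥1} (2l-1)² e^{-π(2l-1)²/ρ²} and h₂ = Σ_{l≥1} (2l)² e^{-π(2l)²/ρ²}. -/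
set_option maxHeartbeats 800000

open Real

lemma aux_sq_le (l : ℕ) : ((l:ℝ)+2)^2 ≤ 4 * Real.exp l := by
  induction l with
  | zero => norm_num [Real.exp_zero]
  | succ n ih =>
    push_cast
    have h : Real.exp ((n:ℝ)+1) = Real.exp n * Real.exp 1 := by rw [← Real.exp_add]
    rw [h]
    have hh : Real.exp (n:ℝ) * 2.7182818283 ≤ Real.exp (n:ℝ) * Real.exp 1 :=
      mul_le_mul_of_nonneg_left (le_of_lt Real.exp_one_gt_d9) (Real.exp_pos (n:ℝ)).le
    nlinarith [Real.exp_pos (n:ℝ), (Nat.cast_nonneg n : (0:ℝ) ≤ n), ih, sq_nonneg ((n:ℝ))]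

lemma aux_exp_neg_one : Real.exp (-1) ≤ 1/2 := by
  have h : Real.exp (-1) * Real.exp 1 = 1 := by rw [← Real.exp_add]; norm_num
  nlinarith [Real.exp_one_gt_d9, Real.exp_pos (-1:ℝ)]

lemma aux_term_le (l : ℕ) :
    ((l:ℝ)+2)^2 * Real.exp (-π*(((l:ℝ)+2)^2 - 1)) ≤ (1/128) * (1/2)^l := by
  have hπ := Real.pi_gt_three
  have hn : (0:ℝ) ≤ (l:ℝ) := Nat.cast_nonneg l
  have h2 : Real.exp (-π*(((l:ℝ)+2)^2 - 1)) ≤ Real.exp (-3*π*((l:ℝ)+1)) := by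
    apply Real.exp_le_exp.2
    nlinarith [sq_nonneg ((l:ℝ)), Real.pi_pos]
  have h3 : ((l:ℝ)+2)^2 * Real.exp (-π*(((l:ℝ)+2)^2 - 1))
      ≤ (4 * Real.exp l) * Real.exp (-3*π*((l:ℝ)+1)) :=
    mul_le_mul (aux_sq_le l) h2 (Real.exp_nonneg _) (by positivity)
  have h4 : (4 * Real.exp l) * Real.exp (-3*π*((l:ℝ)+1)) ≤ (1/128) * (1/2)^l := by
    rw [mul_assoc, ← Real.exp_add]
    have h5 : Real.exp ((l:ℝ) + -3*π*((l:ℝ)+1)) ≤ Real.exp ((((l+9:ℕ)):ℝ) * (-1)) := by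
      apply Real.exp_le_exp.2
      push_cast
      nlinarith
    have h6 : Real.exp ((((l+9:ℕ)):ℝ) * (-1)) = (Real.exp (-1))^(l+9) := Real.exp_nat_mul _ _
    have h7 : (Real.exp (-1))^(l+9) ≤ (1/2:ℝ)^(l+9) :=
      pow_le_pow_left₀ (Real.exp_nonneg _) aux_exp_neg_one _
    have h8 : ((1/2:ℝ))^(l+9) = (1/2)^l * (1/2:ℝ)^9 := pow_add _ _ _
    calc 4 * Real.exp ((l:ℝ) + -3*π*((l:ℝ)+1)) ≤ 4 * ((1/2:ℝ)^l * (1/2:ℝ)^9) := by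
          rw [← h8]
          exact mul_le_mul_of_nonneg_left (h5.trans (h6 ▸ h7)) (by norm_num)
      _ = (1/128) * (1/2)^l := by ring
  exact h3.trans h4

lemma aux_sumS : Summable (fun l : ℕ => ((l:ℝ)+2)^2 * Real.exp (-π*(((l:ℝ)+2)^2 - 1))) := by
  apply Summable.of_nonneg_of_le (fun l => by positivity) aux_term_le
  exact (summable_geometric_of_lt_one (by norm_num) (by norm_num)).mul_left _

lemma aux_sumH (b t : ℝ) (hb1 : 1 ≤ b) (hb2 : b ≤ 4) (ht : π/4 ≤ t) :
    Summable (fun l : ℕ => (2*(l:ℝ)+b)^2 * Real.exp (-((2*(l:ℝ)+b)^2 * t))) := by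
  have hπ := Real.pi_gt_three
  have htpos : (0:ℝ) < t := by linarith [Real.pi_pos]
  have hg : Summable (fun l : ℕ => 16 * (Real.exp (-(1/2:ℝ)))^l) :=
    (summable_geometric_of_lt_one (Real.exp_nonneg _)
      (Real.exp_lt_one_iff.2 (by norm_num))).mul_left 16
  have hle : ∀ l : ℕ, (2*(l:ℝ)+b)^2 * Real.exp (-((2*(l:ℝ)+b)^2 * t))
      ≤ 16 * (Real.exp (-(1/2:ℝ)))^l := by
    intro l
    have hn : (0:ℝ) ≤ (l:ℝ) := Nat.cast_nonneg l
    have h1 : (2*(l:ℝ)+b)^2 ≤ 16 * Real.exp l := by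
      nlinarith [aux_sq_le l, mul_nonneg hn (by linarith : (0:ℝ) ≤ 4 - b)]
    have h2 : Real.exp (-((2*(l:ℝ)+b)^2 * t)) ≤ Real.exp (-(l:ℝ) * (3/2)) := by
      apply Real.exp_le_exp.2
      have hq : 2*(l:ℝ) ≤ (2*(l:ℝ)+b)^2 := by nlinarith
      have hq2 : 2*(l:ℝ) * (3/4) ≤ (2*(l:ℝ)+b)^2 * t := by
        calc 2*(l:ℝ) * (3/4) ≤ 2*(l:ℝ) * t := by
              apply mul_le_mul_of_nonneg_left _ (by linarith)
              linarith
          _ ≤ (2*(l:ℝ)+b)^2 * t := mul_le_mul_of_nonneg_right hq htpos.le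
      linarith
    calc (2*(l:ℝ)+b)^2 * Real.exp (-((2*(l:ℝ)+b)^2 * t))
        ≤ (16 * Real.exp l) * Real.exp (-(l:ℝ) * (3/2)) :=
          mul_le_mul h1 h2 (Real.exp_nonneg _) (by positivity)
      _ = 16 * (Real.exp (-(1/2:ℝ)))^l := by
          rw [mul_assoc, ← Real.exp_add]
          congr 1
          rw [← Real.exp_nat_mul]
          congr 1
          ring
  exact Summable.of_nonneg_of_le (fun l => by positivity) hle hg

theorem stmt_17 (ρ : ℝ) (hρ0 : 0 < ρ) (hρ2 : ρ < 2) :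
    (4 * (1 + ∑' l : ℕ, ((l:ℝ)+2)^2 * Real.exp (-π*(((l:ℝ)+2)^2 - 1))) < Real.exp (π/2)) ∧
    (∑' l : ℕ, (2*(l:ℝ)+2)^2 * Real.exp (-π*(2*(l:ℝ)+2)^2/ρ^2)) <
      (∑' l : ℕ, (2*(l:ℝ)+1)^2 * Real.exp (-π*(2*(l:ℝ)+1)^2/ρ^2)) * Real.exp (-π/ρ^2) := by
  have hπ3 := Real.pi_gt_three
  have hπpos := Real.pi_pos
  set S := ∑' l : ℕ, ((l:ℝ)+2)^2 * Real.exp (-π*(((l:ℝ)+2)^2 - 1)) with hS_def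
  have hSnn : 0 ≤ S := tsum_nonneg (fun l => by positivity)
  have hSle : S ≤ 1/64 := by
    rw [hS_def]
    calc (∑' l : ℕ, ((l:ℝ)+2)^2 * Real.exp (-π*(((l:ℝ)+2)^2 - 1)))
        ≤ ∑' l : ℕ, (1/128:ℝ) * (1/2)^l :=
          Summable.tsum_le_tsum aux_term_le aux_sumS
            ((summable_geometric_of_lt_one (by norm_num) (by norm_num)).mul_left _)
      _ = (1/128 : ℝ) * (1 - 1/2)⁻¹ := by
          rw [tsum_mul_left, tsum_geometric_of_lt_one (by norm_num) (by norm_num)]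
      _ ≤ 1/64 := by norm_num
  have part1 : 4 * (1 + S) < Real.exp (π/2) := by
    have e1 := Real.exp_one_gt_d9
    have e2 : (3/2:ℝ) ≤ Real.exp (1/2:ℝ) := by nlinarith [Real.add_one_le_exp (1/2:ℝ)]
    have e3 : Real.exp (3/2:ℝ) = Real.exp 1 * Real.exp (1/2) := by
      rw [← Real.exp_add]; norm_num
    have e4 : Real.exp (3/2:ℝ) ≤ Real.exp (π/2) := Real.exp_le_exp.2 (by linarith)
    have e5 : (2.7182818283 : ℝ) * (3/2) ≤ Real.exp 1 * Real.exp (1/2) :=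
      mul_le_mul e1.le e2 (by norm_num) (Real.exp_pos 1).le
    nlinarith
  refine ⟨part1, ?_⟩
  -- part 2
  set t := π / ρ^2 with ht_def
  have hρ2pos : (0:ℝ) < ρ^2 := by positivity
  have hρ2lt : ρ^2 < 4 := by nlinarith
  have ht4 : π/4 < t := by
    rw [ht_def, div_lt_div_iff₀ (by norm_num) hρ2pos]
    nlinarith
  have htpos : (0:ℝ) < t := by linarith
  have h2eq : (∑' l : ℕ, (2*(l:ℝ)+2)^2 * Real.exp (-π*(2*(l:ℝ)+2)^2/ρ^2))
      = ∑' l : ℕ, (2*(l:ℝ)+2)^2 * Real.exp (-((2*(l:ℝ)+2)^2 * t)) := by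
    apply tsum_congr
    intro l
    rw [ht_def]
    congr 1
    ring
  have h1eq : (∑' l : ℕ, (2*(l:ℝ)+1)^2 * Real.exp (-π*(2*(l:ℝ)+1)^2/ρ^2))
      = ∑' l : ℕ, (2*(l:ℝ)+1)^2 * Real.exp (-((2*(l:ℝ)+1)^2 * t)) := by
    apply tsum_congr
    intro l
    rw [ht_def]
    congr 1
    ring
  have heeq : -π/ρ^2 = -t := by rw [ht_def]; ring
  rw [h1eq, h2eq, heeq]
  set f₁ : ℕ → ℝ := fun l => (2*(l:ℝ)+1)^2 * Real.exp (-((2*(l:ℝ)+1)^2 * t)) with hf₁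
  set f₂ : ℕ → ℝ := fun l => (2*(l:ℝ)+2)^2 * Real.exp (-((2*(l:ℝ)+2)^2 * t)) with hf₂
  have hs1 : Summable f₁ := aux_sumH 1 t le_rfl (by norm_num) ht4.le
  have hs2 : Summable f₂ := aux_sumH 2 t (by norm_num) (by norm_num) ht4.le
  -- step A: bound the even sum
  have h0 : f₂ 0 = 4 * Real.exp (-(4*t)) := by
    simp only [hf₂]
    norm_num
  have htail : (∑' n : ℕ, f₂ (n+1)) ≤ (Real.exp (-(4*t)) * 4) * S := by
    rw [hS_def, ← tsum_mul_left]
    have hsum1 : Summable (fun n : ℕ => f₂ (n+1)) := (summable_nat_add_iff 1).2 hs2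
    apply Summable.tsum_le_tsum _ hsum1 (aux_sumS.mul_left _)
    intro n
    simp only [hf₂]
    push_cast
    have hn : (0:ℝ) ≤ (n:ℝ) := Nat.cast_nonneg n
    have hexp : Real.exp (-((2*((n:ℝ)+1)+2)^2 * t))
        ≤ Real.exp (-(4*t)) * Real.exp (-π*(((n:ℝ)+2)^2 - 1)) := by
      rw [← Real.exp_add]
      apply Real.exp_le_exp.2
      nlinarith [sq_nonneg ((n:ℝ)), mul_nonneg (mul_nonneg hn hn)
        (by linarith : (0:ℝ) ≤ 4*t - π), mul_nonneg hn (by linarith : (0:ℝ) ≤ 4*t - π)]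
    calc (2*((n:ℝ)+1)+2)^2 * Real.exp (-((2*((n:ℝ)+1)+2)^2 * t))
        ≤ (2*((n:ℝ)+1)+2)^2 *
          (Real.exp (-(4*t)) * Real.exp (-π*(((n:ℝ)+2)^2 - 1))) :=
          mul_le_mul_of_nonneg_left hexp (by positivity)
      _ = (Real.exp (-(4*t)) * 4) * (((n:ℝ)+2)^2 * Real.exp (-π*(((n:ℝ)+2)^2 - 1))) := by
          ring
  have hA : (∑' l : ℕ, f₂ l) ≤ Real.exp (-(4*t)) * (4*(1+S)) := by
    rw [Summable.tsum_eq_zero_add hs2, h0]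
    have hre : Real.exp (-(4*t)) * (4*(1+S))
        = 4 * Real.exp (-(4*t)) + (Real.exp (-(4*t)) * 4) * S := by ring
    rw [hre]
    exact add_le_add_right htail _
  have hA2 : (∑' l : ℕ, f₂ l) < Real.exp (-(2*t)) := by
    have h1 : Real.exp (-(4*t)) * (4*(1+S)) < Real.exp (-(4*t)) * Real.exp (π/2) :=
      mul_lt_mul_of_pos_left part1 (Real.exp_pos _)
    have h2 : Real.exp (-(4*t)) * Real.exp (π/2) ≤ Real.exp (-(4*t)) * Real.exp (2*t) :=
      mul_le_mul_of_nonneg_left (Real.exp_le_exp.2 (by linarith)) (Real.exp_nonneg _)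
    have h3 : Real.exp (-(4*t)) * Real.exp (2*t) = Real.exp (-(2*t)) := by
      rw [← Real.exp_add]; ring_nf
    linarith [hA]
  -- step B: lower bound the odd sum
  have hB : Real.exp (-t) ≤ ∑' l : ℕ, f₁ l := by
    have h := Summable.le_tsum hs1 0 (fun i _ => by simp only [hf₁]; positivity)
    simp only [hf₁] at h
    norm_num at h
    exact h
  have hfin : Real.exp (-(2*t)) ≤ (∑' l : ℕ, f₁ l) * Real.exp (-t) := by
    have he : Real.exp (-(2*t)) = Real.exp (-t) * Real.exp (-t) := by
      rw [← Real.exp_add]; ring_nf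
    rw [he]
    exact mul_le_mul_of_nonneg_right hB (Real.exp_nonneg _)
  linarith
end

section
/- Let f_μ : ℝ → (0, ∞), μ ∈ ℕ, be defined recursively by f_{μ+1}(x) = f_μ(x)/(1 + s_{μ+1}x²) with s_{μ+1} ≥ 0, where f_0(x) = e^{-2πx²/h²} (a Gaussian), and assume all relevant series converge. Then for every w ∈ [0,1] and every μ, Σ_{n,k∈ℤ} [(w+k)² - (w+n)²] f_μ(w+k) f_{μ+1}(w+n) = Σ_{n∈ℤ} Σ_{k≥1} s_{μ+1} k² (2w + 2n + k)² f_μ(w+n+k) f_μ(w+n) / [(1 + s_{μ+1}(w+n)²)(1 + s_{μ+1}(w+n+k)²)] ≥ 0; consequently B̃_{μ+1}(w) ≤ B̃_μ(w), where B̃_μ(w) = (Σ_n (w+n)² f_μ(w+n))/(Σ_n f_μ(w+n)). -/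
open Real

def eUaux : (ℤ × ℕ) ≃ {p : ℤ × ℤ | p.1 < p.2} where
  toFun q := ⟨(q.1, q.1 + q.2 + 1), by simp only [Set.mem_setOf_eq]; omega⟩
  invFun p := (p.1.1, (p.1.2 - p.1.1 - 1).toNat)
  left_inv q := by ext <;> simp <;> omega
  right_inv p := by
    have := p.2
    simp only [Set.mem_setOf_eq] at this
    ext <;> simp <;> omega

def eLaux : (ℤ × ℕ) ≃ {p : ℤ × ℤ | p.2 < p.1} where
  toFun q := ⟨(q.1 + q.2 + 1, q.1), by simp only [Set.mem_setOf_eq]; omega⟩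
  invFun p := (p.1.2, (p.1.1 - p.1.2 - 1).toNat)
  left_inv q := by ext <;> simp <;> omega
  right_inv p := by
    have := p.2
    simp only [Set.mem_setOf_eq] at this
    ext <;> simp <;> omega

lemma key_alg (a w n d P Q : ℝ) (hx : (1:ℝ)+a*(w+n)^2 ≠ 0) (hy : (1:ℝ)+a*(w+n+d)^2 ≠ 0) :
    ((w+n+d)^2 - (w+n)^2)*Q*(P/(1+a*(w+n)^2)) + ((w+n)^2-(w+n+d)^2)*P*(Q/(1+a*(w+n+d)^2))
      = a*d^2*(2*w+2*n+d)^2*Q*P/((1+a*(w+n)^2)*(1+a*(w+n+d)^2)) := by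
  rw [mul_div_assoc', mul_div_assoc', div_add_div _ _ hx hy,
    div_eq_div_iff (mul_ne_zero hx hy) (mul_ne_zero hx hy)]
  ring

set_option maxHeartbeats 1600000 in
theorem stmt_18 (h : ℝ) (hh : 0 < h) (s : ℕ → ℝ) (hs : ∀ μ, 0 ≤ s μ)
    (f : ℕ → ℝ → ℝ)
    (hf0 : ∀ x : ℝ, f 0 x = Real.exp (-2*π*x^2/h^2))
    (hfrec : ∀ (μ : ℕ) (x : ℝ), f (μ+1) x = f μ x / (1 + s (μ+1) * x^2))
    (hfpos : ∀ (μ : ℕ) (x : ℝ), 0 < f μ x)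
    (hsum1 : ∀ (μ : ℕ) (w : ℝ), Summable fun n : ℤ => (w + n)^2 * f μ (w + n))
    (hsum2 : ∀ (μ : ℕ) (w : ℝ), Summable fun n : ℤ => f μ (w + n))
    (hsum3 : ∀ (μ : ℕ) (w : ℝ),
      Summable fun p : ℤ × ℤ =>
        |((w + p.2)^2 - (w + p.1)^2) * f μ (w + p.2) * f (μ+1) (w + p.1)|)
    (w : ℝ) (hw : w ∈ Set.Icc (0:ℝ) 1) (μ : ℕ) :
    ((∑' (n : ℤ) (k : ℤ), ((w + k)^2 - (w + n)^2) * f μ (w + k) * f (μ+1) (w + n))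
      = ∑' (n : ℤ) (k : ℕ),
          s (μ+1) * ((k:ℝ)+1)^2 * (2*w + 2*n + ((k:ℝ)+1))^2
            * f μ (w + n + ((k:ℝ)+1)) * f μ (w + n)
            / ((1 + s (μ+1) * (w + n)^2) * (1 + s (μ+1) * (w + n + ((k:ℝ)+1))^2))) ∧
    (0 ≤ ∑' (n : ℤ) (k : ℤ), ((w + k)^2 - (w + n)^2) * f μ (w + k) * f (μ+1) (w + n)) ∧
    (∑' n : ℤ, (w + n)^2 * f (μ+1) (w + n)) / (∑' n : ℤ, f (μ+1) (w + n))
      ≤ (∑' n : ℤ, (w + n)^2 * f μ (w + n)) / (∑' n : ℤ, f μ (w + n)) := by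
  set a := s (μ+1) with ha
  have ha0 : 0 ≤ a := hs (μ+1)
  set F : ℤ × ℤ → ℝ := fun p =>
    ((w + p.2)^2 - (w + p.1)^2) * f μ (w + p.2) * f (μ+1) (w + p.1) with hF_def
  have hF : Summable F := by
    apply Summable.of_abs
    simpa [hF_def] using hsum3 μ w
  have hden : ∀ x : ℝ, (0:ℝ) < 1 + a * x^2 := by
    intro x; positivity
  set G : ℤ × ℕ → ℝ := fun q =>
    a * ((q.2:ℝ)+1)^2 * (2*w + 2*(q.1:ℝ) + ((q.2:ℝ)+1))^2
      * f μ (w + q.1 + ((q.2:ℝ)+1)) * f μ (w + q.1)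
      / ((1 + a * (w + (q.1:ℝ))^2) * (1 + a * (w + (q.1:ℝ) + ((q.2:ℝ)+1))^2)) with hG_def
  -- pointwise identity : F (eU q) + F (eL q) = G q
  have hpt : ∀ q : ℤ × ℕ, F ((eUaux q : {p : ℤ × ℤ | p.1 < p.2}) : ℤ × ℤ)
      + F ((eLaux q : {p : ℤ × ℤ | p.2 < p.1}) : ℤ × ℤ) = G q := by
    rintro ⟨n, m⟩
    have hcast : ((n + (m:ℤ) + 1 : ℤ) : ℝ) = (n:ℝ) + (m:ℝ) + 1 := by push_cast; ring
    simp only [hF_def, hG_def, eUaux, eLaux, Equiv.coe_fn_mk, hcast]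
    have e1 : w + ((n:ℝ) + (m:ℝ) + 1) = w + (n:ℝ) + ((m:ℝ)+1) := by ring
    rw [e1, hfrec, hfrec, ← ha]
    exact key_alg a w (n:ℝ) ((m:ℝ)+1) _ _ (ne_of_gt (hden _)) (ne_of_gt (hden _))
  have hU : Summable (fun x : {p : ℤ × ℤ | p.1 < p.2} => F x) := hF.subtype _
  have hL : Summable (fun x : {p : ℤ × ℤ | p.2 < p.1} => F x) := hF.subtype _
  have hUc : Summable (fun q : ℤ × ℕ => F ((eUaux q : {p : ℤ × ℤ | p.1 < p.2}) : ℤ × ℤ)) :=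
    (eUaux.summable_iff (f := fun x : {p : ℤ × ℤ | p.1 < p.2} => F x)).mpr hU
  have hLc : Summable (fun q : ℤ × ℕ => F ((eLaux q : {p : ℤ × ℤ | p.2 < p.1}) : ℤ × ℤ)) :=
    (eLaux.summable_iff (f := fun x : {p : ℤ × ℤ | p.2 < p.1} => F x)).mpr hL
  have hGsum : Summable G := (hUc.add hLc).congr hpt
  -- main double-sum equality
  have hmain : (∑' (n : ℤ) (k : ℤ), ((w + k)^2 - (w + n)^2) * f μ (w + k) * f (μ+1) (w + n))
      = ∑' q : ℤ × ℕ, G q := by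
    have h1 : (∑' p : ℤ × ℤ, F p) = ∑' (n : ℤ) (k : ℤ), F (n, k) :=
      Summable.tsum_prod' hF fun b => hF.prod_factor b
    have h1' : (∑' (n : ℤ) (k : ℤ), ((w + k)^2 - (w + n)^2) * f μ (w + k) * f (μ+1) (w + n))
        = ∑' p : ℤ × ℤ, F p := by
      rw [h1]
    rw [h1']
    have hdiag : (∑' x : {p : ℤ × ℤ | p.1 = p.2}, F x) = 0 := by
      have hz : ∀ x : {p : ℤ × ℤ | p.1 = p.2}, F (x : ℤ × ℤ) = 0 := by
        rintro ⟨⟨p1, p2⟩, hp⟩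
        simp only [Set.mem_setOf_eq] at hp
        simp [hF_def, hp]
      rw [tsum_congr hz, tsum_zero]
    have hsplit := Summable.tsum_subtype_add_tsum_subtype_compl hF {p : ℤ × ℤ | p.1 = p.2}
    have hcompl : ({p : ℤ × ℤ | p.1 = p.2}ᶜ : Set (ℤ × ℤ))
        = {p : ℤ × ℤ | p.1 < p.2} ∪ {p : ℤ × ℤ | p.2 < p.1} := by
      ext p; simp only [Set.mem_compl_iff, Set.mem_setOf_eq, Set.mem_union]; omega
    have h2 : (∑' p : ℤ × ℤ, F p)
        = ∑' x : ↑({p : ℤ × ℤ | p.1 < p.2} ∪ {p : ℤ × ℤ | p.2 < p.1}), F x := by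
      rw [← hsplit, hdiag, zero_add, hcompl]
    rw [h2, Summable.tsum_union_disjoint (f := F) (by
        rw [Set.disjoint_left]; intro p hp hq
        simp only [Set.mem_setOf_eq] at hp hq; omega) hU hL]
    rw [← eUaux.tsum_eq (fun x : {p : ℤ × ℤ | p.1 < p.2} => F x),
        ← eLaux.tsum_eq (fun x : {p : ℤ × ℤ | p.2 < p.1} => F x),
        ← Summable.tsum_add hUc hLc]
    exact tsum_congr hpt
  have hGiter : (∑' q : ℤ × ℕ, G q) = ∑' (n : ℤ) (k : ℕ), G (n, k) :=
    Summable.tsum_prod' hGsum fun b => hGsum.prod_factor b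
  have part1 : (∑' (n : ℤ) (k : ℤ), ((w + k)^2 - (w + n)^2) * f μ (w + k) * f (μ+1) (w + n))
      = ∑' (n : ℤ) (k : ℕ),
          a * ((k:ℝ)+1)^2 * (2*w + 2*n + ((k:ℝ)+1))^2
            * f μ (w + n + ((k:ℝ)+1)) * f μ (w + n)
            / ((1 + a * (w + n)^2) * (1 + a * (w + n + ((k:ℝ)+1))^2)) := by
    rw [hmain, hGiter]
  have part2 : 0 ≤ ∑' (n : ℤ) (k : ℤ),
      ((w + k)^2 - (w + n)^2) * f μ (w + k) * f (μ+1) (w + n) := by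
    rw [hmain]
    apply tsum_nonneg
    rintro ⟨n, m⟩
    simp only [hG_def]
    apply div_nonneg
    · have h1 := (hfpos μ (w + (n:ℝ) + ((m:ℝ)+1))).le
      have h2 := (hfpos μ (w + (n:ℝ))).le
      positivity
    · have h1 := hden (w + (n:ℝ))
      have h2 := hden (w + (n:ℝ) + ((m:ℝ)+1))
      positivity
  refine ⟨part1, part2, ?_⟩
  set A := ∑' n : ℤ, (w + n)^2 * f (μ+1) (w + n) with hA
  set B := ∑' n : ℤ, f (μ+1) (w + n) with hB
  set C := ∑' n : ℤ, (w + n)^2 * f μ (w + n) with hC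
  set D := ∑' n : ℤ, f μ (w + n) with hD
  have hBpos : 0 < B := Summable.tsum_pos (hsum2 (μ+1) w) (fun n => (hfpos _ _).le) 0 (hfpos _ _)
  have hDpos : 0 < D := Summable.tsum_pos (hsum2 μ w) (fun n => (hfpos _ _).le) 0 (hfpos _ _)
  have hS : (∑' (n : ℤ) (k : ℤ), ((w + k)^2 - (w + n)^2) * f μ (w + k) * f (μ+1) (w + n))
      = C * B - D * A := by
    have hinner : ∀ n : ℤ,
        (∑' k : ℤ, ((w + k)^2 - (w + n)^2) * f μ (w + k) * f (μ+1) (w + n))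
          = C * f (μ+1) (w + n) - D * ((w + n)^2 * f (μ+1) (w + n)) := by
      intro n
      have e : ∀ k : ℤ, ((w + k)^2 - (w + n)^2) * f μ (w + k) * f (μ+1) (w + n)
          = ((w + k)^2 * f μ (w + k)) * f (μ+1) (w + n)
            - ((w + n)^2 * f (μ+1) (w + n)) * f μ (w + k) := by
        intro k; ring
      rw [tsum_congr e, Summable.tsum_sub ((hsum1 μ w).mul_right _) ((hsum2 μ w).mul_left _)]
      rw [tsum_mul_right, tsum_mul_left, ← hC, ← hD]
      ring
    rw [tsum_congr hinner, Summable.tsum_sub ((hsum2 (μ+1) w).mul_left C)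
      ((hsum1 (μ+1) w).mul_left D), tsum_mul_left, tsum_mul_left, ← hA, ← hB]
  rw [hS] at part2
  rw [div_le_div_iff₀ hBpos hDpos]
  nlinarith [hBpos, hDpos]
end

section
/- Let g(w) = e^{-πw²} and for β, γ > 0 set M_{g_γ,1/β} = β² · sup_{w∈[0,1]} (Σ_{j∈ℤ} (w+j)² e^{-2π(w+j)²/ρ²})/(Σ_{j∈ℤ} e^{-2π(w+j)²/ρ²}) with ρ = γ/β. Then lim_{γ→0} M_{g_γ,1/β} = β²/4. -/
open Real Filter

/-- Constant bounding `∑' j, (w+j)^2 * exp (-(w+j)^2)` uniformly for `w ∈ [0,1]`. -/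
noncomputable def Kc : ℝ := ∑' j : ℤ, (2*(j:ℝ)^2 + 2) * Real.exp (1 - (j:ℝ)^2/2)

lemma helperA (s : ℝ) : s * Real.exp (-s) ≤ 1 := by
  rcases le_or_gt s 0 with hs | hs
  · have h1 : Real.exp (-s) ≤ Real.exp (-s) := le_rfl
    nlinarith [Real.exp_pos (-s), mul_nonpos_of_nonpos_of_nonneg hs (Real.exp_pos (-s)).le]
  · have h1 : s ≤ Real.exp s := by linarith [Real.add_one_le_exp s]
    calc s * Real.exp (-s) ≤ Real.exp s * Real.exp (-s) :=
          mul_le_mul_of_nonneg_right h1 (Real.exp_pos _).le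
      _ = 1 := by rw [← Real.exp_add]; simp

lemma helperB {t c : ℝ} (hc : 0 < c) : t * Real.exp (-(c*t)) ≤ 1/c := by
  have h := helperA (c*t)
  rw [le_div_iff₀ hc]
  calc t * Real.exp (-(c*t)) * c = (c*t) * Real.exp (-(c*t)) := by ring
    _ ≤ 1 := h

lemma summable_exp_int {a : ℝ} (ha : 0 < a) :
    Summable fun j : ℤ => Real.exp (-(a * (j:ℝ)^2)) := by
  have key : Summable fun n : ℕ => Real.exp (-(a * (n:ℝ)^2)) := by
    refine Summable.of_nonneg_of_le (fun n => (Real.exp_pos _).le) (fun n => ?_)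
      (summable_geometric_of_lt_one (Real.exp_pos (-a)).le
        (Real.exp_lt_one_iff.mpr (by linarith)))
    rw [← Real.exp_nat_mul]
    apply Real.exp_le_exp.mpr
    have hn : (n:ℝ) ≤ (n:ℝ)^2 := by
      rcases Nat.eq_zero_or_pos n with h | h
      · simp [h]
      · have : (1:ℝ) ≤ (n:ℝ) := by exact_mod_cast h
        nlinarith
    nlinarith
  apply Summable.of_nat_of_neg
  · simpa using key
  · simpa using key

lemma summable_poly_exp {a : ℝ} (ha : 0 < a) :
    Summable fun j : ℤ => (2*(j:ℝ)^2 + 2) * Real.exp (-(a * (j:ℝ)^2)) := by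
  refine Summable.of_nonneg_of_le (fun j => by positivity) (fun j => ?_)
    (((summable_exp_int (half_pos ha)).mul_left (4/a + 2)))
  have hB : (j:ℝ)^2 * Real.exp (-(a/2 * (j:ℝ)^2)) ≤ 1/(a/2) := helperB (half_pos ha)
  have hE : Real.exp (-(a * (j:ℝ)^2)) =
      Real.exp (-(a/2 * (j:ℝ)^2)) * Real.exp (-(a/2 * (j:ℝ)^2)) := by
    rw [← Real.exp_add]; ring_nf
  have hle1 : Real.exp (-(a/2 * (j:ℝ)^2)) ≤ 1 :=
    Real.exp_le_one_iff.mpr (by nlinarith [sq_nonneg (j:ℝ)])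
  have h2a : 1/(a/2) = 2/a := by rw [one_div_div]
  have hB2 : ((j:ℝ)^2 * Real.exp (-(a/2 * (j:ℝ)^2))) * Real.exp (-(a/2 * (j:ℝ)^2))
      ≤ (2/a) * Real.exp (-(a/2 * (j:ℝ)^2)) := by
    rw [← h2a]
    exact mul_le_mul_of_nonneg_right hB (Real.exp_pos _).le
  have h3 : Real.exp (-(a/2 * (j:ℝ)^2)) * Real.exp (-(a/2 * (j:ℝ)^2))
      ≤ Real.exp (-(a/2 * (j:ℝ)^2)) := by
    nlinarith [Real.exp_pos (-(a/2 * (j:ℝ)^2))]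
  calc (2*(j:ℝ)^2 + 2) * Real.exp (-(a * (j:ℝ)^2))
      = 2 * (((j:ℝ)^2 * Real.exp (-(a/2 * (j:ℝ)^2))) * Real.exp (-(a/2 * (j:ℝ)^2)))
        + 2 * (Real.exp (-(a/2 * (j:ℝ)^2)) * Real.exp (-(a/2 * (j:ℝ)^2))) := by
        rw [hE]; ring
    _ ≤ 2 * ((2/a) * Real.exp (-(a/2 * (j:ℝ)^2))) + 2 * Real.exp (-(a/2 * (j:ℝ)^2)) := by
        have := hB2
        have := h3
        linarith
    _ = (4/a + 2) * Real.exp (-(a/2 * (j:ℝ)^2)) := by ring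

lemma summable_Kc : Summable fun j : ℤ => (2*(j:ℝ)^2 + 2) * Real.exp (1 - (j:ℝ)^2/2) := by
  refine ((summable_poly_exp (a := 1/2) (by norm_num)).mul_left (Real.exp 1)).congr fun j => ?_
  rw [show (1 - (j:ℝ)^2/2) = 1 + -(1/2 * (j:ℝ)^2) by ring, Real.exp_add]
  ring

lemma Kc_nonneg : 0 ≤ Kc :=
  tsum_nonneg fun j => by positivity

section Main

variable {c w : ℝ}

lemma lower_sq (hw0 : 0 ≤ w) (hw1 : w ≤ 1) (j : ℤ) :
    (j:ℝ)^2/2 - 1 ≤ (w + (j:ℝ))^2 := by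
  nlinarith [sq_nonneg ((j:ℝ) + 2*w)]

lemma upper_sq (hw0 : 0 ≤ w) (hw1 : w ≤ 1) (j : ℤ) :
    (w + (j:ℝ))^2 ≤ 2*(j:ℝ)^2 + 2 := by
  nlinarith [sq_nonneg (w - (j:ℝ))]

lemma sD (hc : 0 < c) (hw0 : 0 ≤ w) (hw1 : w ≤ 1) :
    Summable fun j : ℤ => Real.exp (-(c * (w + (j:ℝ))^2)) := by
  refine Summable.of_nonneg_of_le (fun j => (Real.exp_pos _).le) (fun j => ?_)
    ((summable_exp_int (half_pos hc)).mul_left (Real.exp c))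
  rw [← Real.exp_add]
  apply Real.exp_le_exp.mpr
  have := lower_sq hw0 hw1 j
  nlinarith

lemma sN (hc : 0 < c) (hw0 : 0 ≤ w) (hw1 : w ≤ 1) :
    Summable fun j : ℤ => (w + (j:ℝ))^2 * Real.exp (-(c * (w + (j:ℝ))^2)) := by
  refine Summable.of_nonneg_of_le (fun j => by positivity) (fun j => ?_)
    ((summable_poly_exp (half_pos hc)).mul_left (Real.exp c))
  -- goal: (w+j)^2 * exp(-(c(w+j)^2)) ≤ (2j^2+2) * exp(-(c/2 j^2)) * exp c  (after ring reorder)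
  have h1 := upper_sq hw0 hw1 j
  have h2 : Real.exp (-(c * (w + (j:ℝ))^2)) ≤ Real.exp c * Real.exp (-(c/2 * (j:ℝ)^2)) := by
    rw [← Real.exp_add]
    apply Real.exp_le_exp.mpr
    have := lower_sq hw0 hw1 j
    nlinarith
  calc (w + (j:ℝ))^2 * Real.exp (-(c * (w + (j:ℝ))^2))
      ≤ (2*(j:ℝ)^2 + 2) * (Real.exp c * Real.exp (-(c/2 * (j:ℝ)^2))) := by
        apply mul_le_mul h1 h2 (Real.exp_pos _).le (by positivity)
    _ = Real.exp c * ((2*(j:ℝ)^2 + 2) * Real.exp (-(c/2 * (j:ℝ)^2))) := by ring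

lemma sT (hw0 : 0 ≤ w) (hw1 : w ≤ 1) :
    Summable fun j : ℤ => (w + (j:ℝ))^2 * Real.exp (-((w + (j:ℝ))^2)) := by
  have := sN (c := 1) one_pos hw0 hw1
  simpa using this

lemma D_pos (hc : 0 < c) (hw0 : 0 ≤ w) (hw1 : w ≤ 1) :
    0 < ∑' j : ℤ, Real.exp (-(c * (w + (j:ℝ))^2)) :=
  Summable.tsum_pos (sD hc hw0 hw1) (fun j => (Real.exp_pos _).le) 0 (Real.exp_pos _)

lemma T_le_Kc (hw0 : 0 ≤ w) (hw1 : w ≤ 1) :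
    (∑' j : ℤ, (w + (j:ℝ))^2 * Real.exp (-((w + (j:ℝ))^2))) ≤ Kc := by
  refine Summable.tsum_le_tsum (fun j => ?_) (sT hw0 hw1) summable_Kc
  have h1 := upper_sq hw0 hw1 j
  have h2 : Real.exp (-((w + (j:ℝ))^2)) ≤ Real.exp (1 - (j:ℝ)^2/2) := by
    apply Real.exp_le_exp.mpr
    have := lower_sq hw0 hw1 j
    linarith
  exact mul_le_mul h1 h2 (Real.exp_pos _).le (by positivity)

/-- Main upper-bound estimate. -/
lemma key_upper (hc : 4 ≤ c) (hw0 : 0 ≤ w) (hw1 : w ≤ 1) (j₀ j₁ : ℤ) (hne : j₁ ≠ j₀)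
    (hm14 : (w + (j₀:ℝ))^2 ≤ 1/4)
    (hm0 : (w + (j₀:ℝ))^2 ≤ (w + (j₁:ℝ))^2)
    (hfar : ∀ j : ℤ, j ≠ j₀ → j ≠ j₁ → 1 ≤ (w + (j:ℝ))^2) :
    (∑' j : ℤ, (w + (j:ℝ))^2 * Real.exp (-(c * (w + (j:ℝ))^2)))
      ≤ (1/4 + 1/c + Kc * Real.exp (-(c/2)))
        * (∑' j : ℤ, Real.exp (-(c * (w + (j:ℝ))^2))) := by
  have hc0 : 0 < c := by linarith
  set m : ℝ := (w + (j₀:ℝ))^2 with hm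
  have hm0' : 0 ≤ m := sq_nonneg _
  have hsD := sD hc0 hw0 hw1
  have hsN := sN hc0 hw0 hw1
  have hsT := sT hw0 hw1
  set D : ℝ := ∑' j : ℤ, Real.exp (-(c * (w + (j:ℝ))^2)) with hD
  have hD1 : Real.exp (-(c*m)) ≤ D :=
    Summable.le_tsum hsD j₀ (fun j _ => (Real.exp_pos _).le)
  have hDpos : 0 < D := lt_of_lt_of_le (Real.exp_pos _) hD1
  -- the termwise RHS
  set G : ℤ → ℝ := fun j =>
    m * Real.exp (-(c * (w + (j:ℝ))^2)) +
      ((if j = j₁ then Real.exp (-(c*m)) * (1/c) else 0) +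
        Real.exp (-(3*c/4)) * ((w + (j:ℝ))^2 * Real.exp (-((w + (j:ℝ))^2)))) with hG
  have hsI : Summable fun j : ℤ => (if j = j₁ then Real.exp (-(c*m)) * (1/c) else 0) := by
    apply summable_of_ne_finset_zero (s := {j₁})
    intro j hj
    simp only [Finset.mem_singleton] at hj
    simp [hj]
  have hsG : Summable G :=
    (hsD.mul_left m).add (hsI.add (hsT.mul_left _))
  have hterm : ∀ j : ℤ, (w + (j:ℝ))^2 * Real.exp (-(c * (w + (j:ℝ))^2)) ≤ G j := by
    intro j
    rw [hG]
    dsimp only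
    rcases eq_or_ne j j₀ with hj | hj0
    · rw [hj, if_neg (Ne.symm hne), ← hm]
      have h0 : (0:ℝ) ≤ Real.exp (-(3*c/4)) * (m * Real.exp (-m)) := by positivity
      linarith
    rcases eq_or_ne j j₁ with hj | hj1
    · rw [hj, if_pos rfl]
      set x : ℝ := (w + (j₁:ℝ))^2 with hx'
      have hx : m ≤ x := hm0
      have h1 : (x - m) * Real.exp (-(c * (x - m))) ≤ 1/c := helperB hc0
      have h2 : Real.exp (-(c*x)) = Real.exp (-(c*(x-m))) * Real.exp (-(c*m)) := by
        rw [← Real.exp_add]; ring_nf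
      have h3 : (x - m) * Real.exp (-(c*x)) ≤ Real.exp (-(c*m)) * (1/c) := by
        rw [h2]
        calc (x - m) * (Real.exp (-(c*(x-m))) * Real.exp (-(c*m)))
            = ((x - m) * Real.exp (-(c*(x-m)))) * Real.exp (-(c*m)) := by ring
          _ ≤ (1/c) * Real.exp (-(c*m)) :=
              mul_le_mul_of_nonneg_right h1 (Real.exp_pos _).le
          _ = Real.exp (-(c*m)) * (1/c) := by ring
      have h4 : (0:ℝ) ≤ Real.exp (-(3*c/4)) * (x * Real.exp (-x)) := by positivity
      nlinarith [Real.exp_pos (-(c*x))]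
    · rw [if_neg hj1]
      set x : ℝ := (w + (j:ℝ))^2 with hx'
      have hx1 : 1 ≤ x := hfar j hj0 hj1
      have hE : Real.exp (-(c*x)) ≤ Real.exp (-(3*c/4)) * Real.exp (-x) := by
        rw [← Real.exp_add]
        apply Real.exp_le_exp.mpr
        nlinarith
      have h5 : x * Real.exp (-(c*x)) ≤ Real.exp (-(3*c/4)) * (x * Real.exp (-x)) := by
        calc x * Real.exp (-(c*x)) ≤ x * (Real.exp (-(3*c/4)) * Real.exp (-x)) :=
              mul_le_mul_of_nonneg_left hE (by positivity)
          _ = Real.exp (-(3*c/4)) * (x * Real.exp (-x)) := by ring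
      have h6 : (0:ℝ) ≤ m * Real.exp (-(c*x)) := by positivity
      linarith
  have hNG : (∑' j : ℤ, (w + (j:ℝ))^2 * Real.exp (-(c * (w + (j:ℝ))^2))) ≤ ∑' j, G j :=
    Summable.tsum_le_tsum hterm hsN hsG
  have hGsum : (∑' j, G j) = m * D + (Real.exp (-(c*m)) * (1/c) +
      Real.exp (-(3*c/4)) * (∑' j : ℤ, (w + (j:ℝ))^2 * Real.exp (-((w + (j:ℝ))^2)))) := by
    rw [hG, Summable.tsum_add (hsD.mul_left m) (hsI.add (hsT.mul_left _)),
      Summable.tsum_add hsI (hsT.mul_left _), tsum_mul_left, tsum_mul_left, tsum_ite_eq]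
  set T : ℝ := ∑' j : ℤ, (w + (j:ℝ))^2 * Real.exp (-((w + (j:ℝ))^2)) with hT
  have hTK : T ≤ Kc := T_le_Kc hw0 hw1
  have hTnn : 0 ≤ T := tsum_nonneg fun j => by positivity
  have hA : m * D ≤ (1/4) * D := mul_le_mul_of_nonneg_right hm14 hDpos.le
  have hB : Real.exp (-(c*m)) * (1/c) ≤ (1/c) * D := by
    calc Real.exp (-(c*m)) * (1/c) ≤ D * (1/c) :=
          mul_le_mul_of_nonneg_right hD1 (by positivity)
      _ = (1/c) * D := by ring
  have hC : Real.exp (-(3*c/4)) * T ≤ Kc * Real.exp (-(c/2)) * D := by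
    calc Real.exp (-(3*c/4)) * T ≤ Real.exp (-(3*c/4)) * Kc :=
          mul_le_mul_of_nonneg_left hTK (Real.exp_pos _).le
      _ ≤ (Real.exp (-(c/2)) * Real.exp (-(c*m))) * Kc := by
          apply mul_le_mul_of_nonneg_right _ Kc_nonneg
          rw [← Real.exp_add]
          apply Real.exp_le_exp.mpr
          nlinarith
      _ ≤ (Real.exp (-(c/2)) * D) * Kc := by
          apply mul_le_mul_of_nonneg_right _ Kc_nonneg
          exact mul_le_mul_of_nonneg_left hD1 (Real.exp_pos _).le
      _ = Kc * Real.exp (-(c/2)) * D := by ring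
  have hexpand : (1/4 + 1/c + Kc * Real.exp (-(c/2))) * D
      = (1/4)*D + (1/c)*D + Kc * Real.exp (-(c/2)) * D := by ring
  rw [hexpand]
  calc (∑' j : ℤ, (w + (j:ℝ))^2 * Real.exp (-(c * (w + (j:ℝ))^2)))
      ≤ ∑' j, G j := hNG
    _ = m * D + (Real.exp (-(c*m)) * (1/c) + Real.exp (-(3*c/4)) * T) := hGsum
    _ ≤ (1/4)*D + (1/c)*D + Kc * Real.exp (-(c/2)) * D := by linarith

lemma far_bound (hw0 : 0 ≤ w) (hw1 : w ≤ 1) (j : ℤ) (hj0 : j ≠ 0) (hj1 : j ≠ -1) :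
    1 ≤ (w + (j:ℝ))^2 := by
  rcases (by omega : 1 ≤ j ∨ j ≤ -2) with h | h
  · have : (1:ℝ) ≤ (j:ℝ) := by exact_mod_cast h
    nlinarith
  · have : (j:ℝ) ≤ -2 := by exact_mod_cast h
    nlinarith

lemma ratio_le (hc : 4 ≤ c) (hw0 : 0 ≤ w) (hw1 : w ≤ 1) :
    (∑' j : ℤ, (w + (j:ℝ))^2 * Real.exp (-(c * (w + (j:ℝ))^2)))
      / (∑' j : ℤ, Real.exp (-(c * (w + (j:ℝ))^2)))
      ≤ 1/4 + 1/c + Kc * Real.exp (-(c/2)) := by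
  have hc0 : 0 < c := by linarith
  rw [div_le_iff₀ (D_pos hc0 hw0 hw1)]
  rcases le_or_gt w (1/2) with hw | hw
  · refine key_upper hc hw0 hw1 0 (-1) (by decide) ?_ ?_ ?_
    · push_cast; nlinarith
    · push_cast; nlinarith
    · intro j hj0 hj1; exact far_bound hw0 hw1 j hj0 hj1
  · refine key_upper hc hw0 hw1 (-1) 0 (by decide) ?_ ?_ ?_
    · push_cast; nlinarith
    · push_cast; nlinarith
    · intro j hj0 hj1; exact far_bound hw0 hw1 j hj1 hj0

lemma key_lower (hc : 0 < c) :
    1/4 ≤ (∑' j : ℤ, ((1:ℝ)/2 + (j:ℝ))^2 * Real.exp (-(c * ((1:ℝ)/2 + (j:ℝ))^2)))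
      / (∑' j : ℤ, Real.exp (-(c * ((1:ℝ)/2 + (j:ℝ))^2))) := by
  have hw0 : (0:ℝ) ≤ 1/2 := by norm_num
  have hw1 : (1:ℝ)/2 ≤ 1 := by norm_num
  rw [le_div_iff₀ (D_pos hc hw0 hw1)]
  rw [← tsum_mul_left]
  refine Summable.tsum_le_tsum (fun j => ?_) ((sD hc hw0 hw1).mul_left _) (sN hc hw0 hw1)
  have hq : 1/4 ≤ ((1:ℝ)/2 + (j:ℝ))^2 := by
    rcases (by omega : j ≤ -1 ∨ 0 ≤ j) with h | h
    · have : (j:ℝ) ≤ -1 := by exact_mod_cast h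
      nlinarith
    · have : (0:ℝ) ≤ (j:ℝ) := by exact_mod_cast h
      nlinarith
  exact mul_le_mul_of_nonneg_right hq (Real.exp_pos _).le

end Main

theorem stmt_19 (β : ℝ) (hβ : 0 < β) :
    Filter.Tendsto
      (fun γ : ℝ =>
        β^2 * ⨆ w : Set.Icc (0:ℝ) 1,
          (∑' j : ℤ, ((w:ℝ) + j)^2 * Real.exp (-2*π*((w:ℝ) + j)^2/(γ/β)^2)) /
            (∑' j : ℤ, Real.exp (-2*π*((w:ℝ) + j)^2/(γ/β)^2)))
      (nhdsWithin 0 (Set.Ioi 0)) (nhds (β^2/4)) := by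
  have hβ' : β ≠ 0 := ne_of_gt hβ
  -- c as a function of γ
  set cf : ℝ → ℝ := fun γ => 2*π*β^2/γ^2 with hcf
  set F : ℝ → ℝ := fun c => ⨆ w : Set.Icc (0:ℝ) 1,
    (∑' j : ℤ, ((w:ℝ) + (j:ℝ))^2 * Real.exp (-(c * ((w:ℝ) + (j:ℝ))^2)))
      / (∑' j : ℤ, Real.exp (-(c * ((w:ℝ) + (j:ℝ))^2))) with hF
  -- tendsto of cf to atTop
  have hc_top : Tendsto cf (nhdsWithin 0 (Set.Ioi 0)) atTop := by
    rw [hcf]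
    have h1 : Tendsto (fun γ : ℝ => γ^2) (nhdsWithin 0 (Set.Ioi 0))
        (nhdsWithin 0 (Set.Ioi 0)) := by
      apply tendsto_nhdsWithin_of_tendsto_nhds_of_eventually_within
      · have : Tendsto (fun γ : ℝ => γ^2) (nhds 0) (nhds 0) := by
          have := (continuous_pow 2).tendsto (0:ℝ)
          simpa using this
        exact this.mono_left nhdsWithin_le_nhds
      · filter_upwards [self_mem_nhdsWithin] with γ hγ
        exact pow_pos (Set.mem_Ioi.mp hγ) 2
    have h2 : Tendsto (fun γ : ℝ => (γ^2)⁻¹) (nhdsWithin 0 (Set.Ioi 0)) atTop :=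
      tendsto_inv_nhdsGT_zero.comp h1
    have h3 : Tendsto (fun γ : ℝ => 2*π*β^2 * (γ^2)⁻¹) (nhdsWithin 0 (Set.Ioi 0)) atTop :=
      h2.const_mul_atTop (by positivity)
    refine h3.congr fun γ => ?_
    rw [div_eq_mul_inv]
  -- bound function tendsto
  have hBnd : Tendsto (fun γ : ℝ => 1/4 + 1/(cf γ) + Kc * Real.exp (-(cf γ/2)))
      (nhdsWithin 0 (Set.Ioi 0)) (nhds (1/4)) := by
    have h1 : Tendsto (fun γ : ℝ => 1/(cf γ)) (nhdsWithin 0 (Set.Ioi 0)) (nhds 0) := by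
      simpa [one_div, Function.comp_def] using (tendsto_inv_atTop_zero.comp hc_top)
    have h2 : Tendsto (fun γ : ℝ => Real.exp (-(cf γ/2))) (nhdsWithin 0 (Set.Ioi 0))
        (nhds 0) := by
      apply Real.tendsto_exp_atBot.comp
      apply tendsto_neg_atTop_atBot.comp
      exact Filter.Tendsto.atTop_div_const (by norm_num) hc_top
    have := ((tendsto_const_nhds (x := (1:ℝ)/4)).add h1).add (h2.const_mul Kc)
    simpa using this
  -- F between 1/4 and bound eventually
  have hev : ∀ᶠ γ in nhdsWithin 0 (Set.Ioi 0), 4 ≤ cf γ := hc_top.eventually_ge_atTop 4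
  have hFub : ∀ᶠ γ in nhdsWithin 0 (Set.Ioi 0),
      F (cf γ) ≤ 1/4 + 1/(cf γ) + Kc * Real.exp (-(cf γ/2)) := by
    filter_upwards [hev] with γ hγ
    exact ciSup_le fun w => ratio_le hγ w.2.1 w.2.2
  have hFlb : ∀ᶠ γ in nhdsWithin 0 (Set.Ioi 0), 1/4 ≤ F (cf γ) := by
    filter_upwards [hev] with γ hγ
    have hc0 : 0 < cf γ := by linarith
    have hbdd : BddAbove (Set.range fun w : Set.Icc (0:ℝ) 1 =>
        (∑' j : ℤ, ((w:ℝ) + (j:ℝ))^2 * Real.exp (-(cf γ * ((w:ℝ) + (j:ℝ))^2)))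
          / (∑' j : ℤ, Real.exp (-(cf γ * ((w:ℝ) + (j:ℝ))^2)))) := by
      refine ⟨1/4 + 1/(cf γ) + Kc * Real.exp (-(cf γ/2)), ?_⟩
      rintro x ⟨w, rfl⟩
      exact ratio_le hγ w.2.1 w.2.2
    have := le_ciSup hbdd (⟨1/2, by norm_num, by norm_num⟩ : Set.Icc (0:ℝ) 1)
    exact le_trans (key_lower hc0) this
  have hFto : Tendsto (fun γ : ℝ => F (cf γ)) (nhdsWithin 0 (Set.Ioi 0)) (nhds (1/4)) :=
    tendsto_of_tendsto_of_tendsto_of_le_of_le' tendsto_const_nhds hBnd hFlb hFub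
  have hmul : Tendsto (fun γ : ℝ => β^2 * F (cf γ)) (nhdsWithin 0 (Set.Ioi 0))
      (nhds (β^2/4)) := by
    have h := hFto.const_mul (β^2)
    rw [show β^2 * (1/4) = β^2/4 by ring] at h
    exact h
  refine hmul.congr' ?_
  filter_upwards [self_mem_nhdsWithin] with γ hγ
  have hγ0 : (0:ℝ) < γ := hγ
  have hγ' : γ ≠ 0 := ne_of_gt hγ0
  congr 1
  apply iSup_congr
  intro w
  congr 1
  · exact tsum_congr fun j => by
      congr 2
      simp only [hcf]
      field_simp
  · exact tsum_congr fun j => by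
      congr 1
      simp only [hcf]
      field_simp
end
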